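/- arXiv:1402.4168 — 9 statements merged into one kernel-verified Lean document; each statement's English description precedes it below -/
import Mathlib

section
/- Let G and R be locally compact Hausdorff topological groups and (A,μ) a partially crossed topological G-R-bimodule (A Hausdorff). For g ∈ G and (α,r) ∈ Der_c(G,(A,μ)) set g•(α,r) = (α̃, g•r), where α̃(h) = g•α(g⁻¹hg). Then g•(α,r) again lies in Der_c(G,(A,μ)), this defines a group action of G on Der_c(G,(A,μ)) acting by group automorphisms of (Der_c(G,(A,μ)),⋆), and the action map G × Der_c(G,(A,μ)) → Der_c(G,(A,μ)) is continuous; i.e., Der_c(G,(A,μ)) is a topological G-module. -/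
variable (G R A : Type*)
  [Group G] [TopologicalSpace G] [IsTopologicalGroup G]
  [Group R] [TopologicalSpace R] [IsTopologicalGroup R]
  [Group A] [TopologicalSpace A] [IsTopologicalGroup A]
  [MulDistribMulAction R A] [ContinuousSMul R A]
  [MulDistribMulAction G A] [ContinuousSMul G A]
  [MulDistribMulAction G R] [ContinuousSMul G R]

/-- The set `Der_c(G,(A,μ))` inside `C(G,A) × R`. -/
def derSet (μ : A →* R) : Set (C(G, A) × R) :=
  {p | (∀ g h : G, p.1 (g * h) = p.1 g * g • p.1 h) ∧ ∀ g : G, μ (p.1 g) = p.2 * (g • p.2)⁻¹}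

/-- The product `⋆` on (the ambient space of) `Der_c(G,(A,μ))`. -/
def dstar (p q : C(G, A) × R) : C(G, A) × R :=
  (⟨fun g => (p.2 • q.1 g) * p.1 g, (q.1.continuous.const_smul p.2).mul p.1.continuous⟩,
    p.2 * q.2)

/-- The `G`-action on (the ambient space of) `Der_c(G,(A,μ))`:
`g • (α,r) = ((h ↦ g • α (g⁻¹ h g)), g • r)`. -/
def gact (g : G) (p : C(G, A) × R) : C(G, A) × R :=
  (⟨fun h => g • p.1 (g⁻¹ * h * g),
    (p.1.continuous.comp ((continuous_const.mul continuous_id).mul continuous_const)).const_smul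
      g⟩,
    g • p.2)

/-- Let `G`, `R` be locally compact Hausdorff groups and `(A,μ)` a partially
crossed topological `G-R`-bimodule (`A` Hausdorff). Then `g • (α,r) = ((h ↦ g • α (g⁻¹hg)), g • r)`
maps `Der_c(G,(A,μ))` to itself, defines a group action of `G` acting by automorphisms of
`(Der_c(G,(A,μ)), ⋆)`, and the action map is continuous; i.e. `Der_c(G,(A,μ))` is a topological
`G`-module. -/
theorem derc_topological_G_module
    [LocallyCompactSpace G] [T2Space G] [LocallyCompactSpace R] [T2Space R] [T2Space A]
    (μ : A →* R) (hμc : Continuous μ)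
    (hμR : ∀ (r : R) (a : A), μ (r • a) = r * μ a * r⁻¹)
    (hμG : ∀ (g : G) (a : A), μ (g • a) = g • μ a)
    (hcomp : ∀ (g : G) (r : R) (a : A), (g • r) • a = g • r • g⁻¹ • a)
    (hpart : ∀ a : A, μ a ∈ commutator R → ∀ b : A, μ a • b = a * b * a⁻¹) :
    (∀ g : G, ∀ p ∈ derSet G R A μ, gact G R A g p ∈ derSet G R A μ) ∧
    (∀ p ∈ derSet G R A μ, gact G R A 1 p = p) ∧
    (∀ g g' : G, ∀ p ∈ derSet G R A μ,
      gact G R A (g * g') p = gact G R A g (gact G R A g' p)) ∧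
    (∀ g : G, ∀ p ∈ derSet G R A μ, ∀ q ∈ derSet G R A μ,
      gact G R A g (dstar G R A p q) = dstar G R A (gact G R A g p) (gact G R A g q)) ∧
    Continuous (fun x : G × (derSet G R A μ) => gact G R A x.1 x.2.val) := by
  refine ⟨?_, ?_, ?_, ?_, ?_⟩
  · rintro g p ⟨h1, h2⟩
    constructor
    · intro x y
      show g • p.1 (g⁻¹ * (x * y) * g)
          = g • p.1 (g⁻¹ * x * g) * x • (g • p.1 (g⁻¹ * y * g))
      have e : g⁻¹ * (x * y) * g = (g⁻¹ * x * g) * (g⁻¹ * y * g) := by group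
      rw [e, h1, smul_mul', ← mul_smul, ← mul_smul]
      congr 2
      group
    · intro x
      show μ (g • p.1 (g⁻¹ * x * g)) = g • p.2 * (x • (g • p.2))⁻¹
      rw [hμG, h2, smul_mul']
      congr 1
      rw [smul_inv', ← mul_smul, ← mul_smul]
      congr 2
      group
  · rintro p -
    refine Prod.ext ?_ (one_smul _ _)
    ext h
    show (1 : G) • p.1 (1⁻¹ * h * 1) = p.1 h
    simp
  · intro g g' p _
    refine Prod.ext ?_ (mul_smul _ _ _)
    ext h
    show (g * g') • p.1 ((g * g')⁻¹ * h * (g * g'))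
        = g • (g' • p.1 (g'⁻¹ * (g⁻¹ * h * g) * g'))
    rw [← mul_smul]
    congr 2
    group
  · intro g p _ q _
    refine Prod.ext ?_ (smul_mul' _ _ _)
    ext h
    show g • ((p.2 • q.1 (g⁻¹ * h * g)) * p.1 (g⁻¹ * h * g))
        = (g • p.2) • (g • q.1 (g⁻¹ * h * g)) * g • p.1 (g⁻¹ * h * g)
    rw [smul_mul', hcomp, inv_smul_smul]
  · unfold gact
    refine Continuous.prodMk ?_ ?_
    · apply ContinuousMap.continuous_of_continuous_uncurry
      have hev : Continuous fun q : C(G, A) × G => q.1 q.2 := by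
        exact continuous_eval
      have h1 : Continuous fun x : (G × derSet G R A μ) × G =>
          x.1.2.val.1 (x.1.1⁻¹ * x.2 * x.1.1) := by
        exact hev.comp (Continuous.prodMk
          (continuous_fst.comp (continuous_subtype_val.comp (continuous_snd.comp continuous_fst)))
          ((((continuous_fst.comp continuous_fst).inv).mul continuous_snd).mul
            (continuous_fst.comp continuous_fst)))
      exact continuous_smul.comp ((continuous_fst.comp continuous_fst).prodMk h1)
    · exact continuous_smul.comp
        (continuous_fst.prodMk
          (continuous_snd.comp (continuous_subtype_val.comp continuous_snd)))
end

section
/- Let G and R be locally compact Hausdorff topological groups and (A,μ) a partially crossed topological G-R-bimodule (A Hausdorff). Suppose additionally that G is a topological R-module and that (r•g)•a = r•(g•(r⁻¹•a)) for all r ∈ R, g ∈ G, a ∈ A, and (r•g)•s = r·(g•(r⁻¹·s·r))·r⁻¹ for all r,s ∈ R, g ∈ G. For r ∈ R and (α,s) ∈ Der_c(G,(A,μ)) set r•(α,s) = (α̃, r·s·r⁻¹), where α̃(g) = r•α(r⁻¹•g). Then r•(α,s) again lies in Der_c(G,(A,μ)), this defines a group action of R on Der_c(G,(A,μ)) acting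 by group automorphisms of (Der_c(G,(A,μ)),⋆), and the action map R × Der_c(G,(A,μ)) → Der_c(G,(A,μ)) is continuous; i.e., Der_c(G,(A,μ)) is a topological R-module. -/
variable (G R A : Type*)
  [Group G] [TopologicalSpace G] [IsTopologicalGroup G]
  [Group R] [TopologicalSpace R] [IsTopologicalGroup R]
  [Group A] [TopologicalSpace A] [IsTopologicalGroup A]
  [MulDistribMulAction R A] [ContinuousSMul R A]
  [MulDistribMulAction G A] [ContinuousSMul G A]
  [MulDistribMulAction G R] [ContinuousSMul G R]
  [MulDistribMulAction R G] [ContinuousSMul R G]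

/-- The `R`-action on (the ambient space of) `Der_c(G,(A,μ))`:
`r • (α,s) = ((g ↦ r • α (r⁻¹ • g)), r * s * r⁻¹)`. -/
def ract (r : R) (p : C(G, A) × R) : C(G, A) × R :=
  (⟨fun g => r • p.1 (r⁻¹ • g),
    (p.1.continuous.comp (continuous_const_smul r⁻¹)).const_smul r⟩,
    r * p.2 * r⁻¹)

/-- Let `G`, `R` be locally compact Hausdorff groups and `(A,μ)` a partially
crossed topological `G-R`-bimodule (`A` Hausdorff) such that `G` is moreover a topological
`R`-module satisfying the compatibility conditions
`(r • g) • a = r • (g • (r⁻¹ • a))` and `(r • g) • s = r * (g • (r⁻¹ * s * r)) * r⁻¹`.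
Then `r • (α,s) = ((g ↦ r • α (r⁻¹ • g)), r * s * r⁻¹)` maps `Der_c(G,(A,μ))` to itself,
defines a group action of `R` acting by automorphisms of `(Der_c(G,(A,μ)), ⋆)`, and the
action map is continuous; i.e. `Der_c(G,(A,μ))` is a topological `R`-module. -/
theorem derc_topological_R_module
    [LocallyCompactSpace G] [T2Space G] [LocallyCompactSpace R] [T2Space R] [T2Space A]
    (μ : A →* R) (hμc : Continuous μ)
    (hμR : ∀ (r : R) (a : A), μ (r • a) = r * μ a * r⁻¹)
    (hμG : ∀ (g : G) (a : A), μ (g • a) = g • μ a)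
    (hcomp : ∀ (g : G) (r : R) (a : A), (g • r) • a = g • r • g⁻¹ • a)
    (hpart : ∀ a : A, μ a ∈ commutator R → ∀ b : A, μ a • b = a * b * a⁻¹)
    (hcomp' : ∀ (r : R) (g : G) (a : A), (r • g) • a = r • g • r⁻¹ • a)
    (hcomp'' : ∀ (r s : R) (g : G), (r • g) • s = r * (g • (r⁻¹ * s * r)) * r⁻¹) :
    (∀ r : R, ∀ p ∈ derSet G R A μ, ract G R A r p ∈ derSet G R A μ) ∧
    (∀ p ∈ derSet G R A μ, ract G R A 1 p = p) ∧
    (∀ r s : R, ∀ p ∈ derSet G R A μ,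
      ract G R A (r * s) p = ract G R A r (ract G R A s p)) ∧
    (∀ r : R, ∀ p ∈ derSet G R A μ, ∀ q ∈ derSet G R A μ,
      ract G R A r (dstar G R A p q) = dstar G R A (ract G R A r p) (ract G R A r q)) ∧
    Continuous (fun x : R × (derSet G R A μ) => ract G R A x.1 x.2.val) := by
  have key : ∀ (r : R) (g : G) (b : A), r • ((r⁻¹ • g) • b) = g • r • b := by
    intro r g b
    have h := hcomp' r (r⁻¹ • g) (r • b)
    rw [smul_inv_smul, inv_smul_smul] at h
    exact h.symm
  refine ⟨?_, ?_, ?_, ?_, ?_⟩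
  · rintro r p ⟨h1, h2⟩
    refine ⟨fun g h => ?_, fun g => ?_⟩
    · simp only [ract, ContinuousMap.coe_mk]
      rw [smul_mul', h1, smul_mul', key]
    · simp only [ract, ContinuousMap.coe_mk]
      rw [hμR, h2, hcomp'' r⁻¹ p.2 g]
      simp only [inv_inv]
      group
  · intro p _
    simp only [ract]
    ext g
    · simp
    · simp
  · intro r s p _
    simp only [ract]
    ext g
    · simp [mul_smul, mul_inv_rev]
    · simp only [ContinuousMap.coe_mk]
      group
  · intro r p _ q _
    simp only [ract, dstar]
    ext g
    · simp only [ContinuousMap.coe_mk, smul_mul']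
      congr 1
      rw [mul_smul, mul_smul, inv_smul_smul]
    · simp only [ContinuousMap.coe_mk]
      group
  · apply Continuous.prodMk
    · apply ContinuousMap.continuous_of_continuous_uncurry
      have hev : Continuous fun y : C(G, A) × G => y.1 y.2 := continuous_eval
      have h1 : Continuous fun y : (R × derSet G R A μ) × G =>
          (y.1.2.val.1 : C(G, A)) (y.1.1⁻¹ • y.2) := by
        have hm : Continuous fun y : (R × derSet G R A μ) × G =>
            (((y.1.2.val.1 : C(G, A)), y.1.1⁻¹ • y.2) : C(G, A) × G) := by
          refine Continuous.prodMk ?_ ?_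
          · exact continuous_fst.snd.subtype_val.fst
          · exact continuous_smul.comp ((continuous_inv.comp continuous_fst.fst).prodMk
              continuous_snd)
        exact hev.comp hm
      exact continuous_smul.comp (continuous_fst.fst.prodMk h1)
    · have hv : Continuous fun x : R × derSet G R A μ => (x.2.val.2 : R) :=
        continuous_snd.subtype_val.snd
      exact (continuous_fst.mul hv).mul (continuous_fst.inv)
end

section
/- Let G and R be locally compact Hausdorff topological groups and (A,μ) a partially crossed topological G-R-bimodule (A Hausdorff). Suppose G and R act continuously on each other and on A, and these actions are compatible: (r•g)•s = r·(g•(r⁻¹·s·r))·r⁻¹ and (g•r)•h = g·(r•(g⁻¹·h·g))·g⁻¹ for all r,s ∈ R and g,h ∈ G, and (r•g)•a = r•(g•(r⁻¹•a)) and (g•r)•a = g•(r•(g⁻¹•a)) for all r ∈ R, g ∈ G, a ∈ A. Equip Der_c(G,(A,μ)) with the G-action g•(α,r) = ((h ↦ g•α(g⁻¹hg)), g•r) and the R-action r•(α,s) = ((g ↦ r•α(r⁻¹•g)), r·s·r⁻¹). Then the map γ : Der_c(G,(A,μ)) → R, (α,r) ↦ r, is a continuous group homomorphism satisfying γ(g•x)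 = g•γ(x) and γ(r•x) = r·γ(x)·r⁻¹ for all g ∈ G, r ∈ R, x ∈ Der_c(G,(A,μ)), and the compatibility (g•r)•x = g•(r•(g⁻¹•x)) holds for all g ∈ G, r ∈ R, x ∈ Der_c(G,(A,μ)); i.e., (Der_c(G,(A,μ)), γ) is a precrossed topological G-R-bimodule. -/
variable (G R A : Type*)
  [Group G] [TopologicalSpace G] [IsTopologicalGroup G]
  [Group R] [TopologicalSpace R] [IsTopologicalGroup R]
  [Group A] [TopologicalSpace A] [IsTopologicalGroup A]
  [MulDistribMulAction R A] [ContinuousSMul R A]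
  [MulDistribMulAction G A] [ContinuousSMul G A]
  [MulDistribMulAction G R] [ContinuousSMul G R]
  [MulDistribMulAction R G] [ContinuousSMul R G]

/-- Let `G`, `R` be locally compact Hausdorff groups and `(A,μ)` a partially
crossed topological `G-R`-bimodule (`A` Hausdorff), where `G` and `R` act continuously on each
other and on `A` compatibly. Equip `Der_c(G,(A,μ))` with the `G`-action `gact` and the
`R`-action `ract`. Then `γ : (α,r) ↦ r` is a continuous group homomorphism on `Der_c(G,(A,μ))`
satisfying `γ(g • x) = g • γ(x)`, `γ(r • x) = r * γ(x) * r⁻¹`, and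
`(g • r) • x = g • (r • (g⁻¹ • x))`; i.e. `(Der_c(G,(A,μ)), γ)` is a precrossed topological
`G-R`-bimodule. -/
theorem derc_gamma_precrossed_bimodule
    [LocallyCompactSpace G] [T2Space G] [LocallyCompactSpace R] [T2Space R] [T2Space A]
    (μ : A →* R) (hμc : Continuous μ)
    (hμR : ∀ (r : R) (a : A), μ (r • a) = r * μ a * r⁻¹)
    (hμG : ∀ (g : G) (a : A), μ (g • a) = g • μ a)
    (hGRA : ∀ (g : G) (r : R) (a : A), (g • r) • a = g • r • g⁻¹ • a)
    (hpart : ∀ a : A, μ a ∈ commutator R → ∀ b : A, μ a • b = a * b * a⁻¹)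
    (hRGA : ∀ (r : R) (g : G) (a : A), (r • g) • a = r • g • r⁻¹ • a)
    (hRGR : ∀ (r s : R) (g : G), (r • g) • s = r * (g • (r⁻¹ * s * r)) * r⁻¹)
    (hGRG : ∀ (g h : G) (r : R), (g • r) • h = g * (r • (g⁻¹ * h * g)) * g⁻¹) :
    Continuous (fun p : derSet G R A μ => p.val.2) ∧
    (∀ p ∈ derSet G R A μ, ∀ q ∈ derSet G R A μ, (dstar G R A p q).2 = p.2 * q.2) ∧
    (∀ g : G, ∀ p ∈ derSet G R A μ, (gact G R A g p).2 = g • p.2) ∧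
    (∀ r : R, ∀ p ∈ derSet G R A μ, (ract G R A r p).2 = r * p.2 * r⁻¹) ∧
    (∀ (g : G) (r : R), ∀ p ∈ derSet G R A μ,
      ract G R A (g • r) p = gact G R A g (ract G R A r (gact G R A g⁻¹ p))) := by
  refine ⟨continuous_snd.comp continuous_subtype_val, fun _ _ _ _ => rfl, fun _ _ _ => rfl,
    fun _ _ _ => rfl, fun g r p _ => ?_⟩
  refine Prod.ext (ContinuousMap.ext fun h => ?_) ?_
  · simp only [ract, gact, ContinuousMap.coe_mk]
    rw [hGRA, ← smul_inv', hGRG g h r⁻¹]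
    simp only [inv_inv]
  · show (g • r) * p.2 * (g • r)⁻¹ = g • (r * (g⁻¹ • p.2) * r⁻¹)
    rw [smul_mul', smul_mul', smul_inv_smul, ← smul_inv']
end

section
/- Let G be a locally compact Hausdorff topological group with trivial center and (A,μ) a partially crossed topological G-module with A compact Hausdorff. Then Inn(G,(A,μ)) = {((g ↦ a·(g•a)⁻¹), μ(a)) : a ∈ A} is a compact, hence closed, subset of Der_c(G,(A,μ)) (with its subspace topology from C(G,A) × G). -/
variable (G A : Type*)
  [Group G] [TopologicalSpace G] [IsTopologicalGroup G]
  [Group A] [TopologicalSpace A] [IsTopologicalGroup A]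
  [MulDistribMulAction G A] [ContinuousSMul G A]

/-- `Der_c(G,(A,μ))` for a topological `G`-module `(A,μ)` (with `G` acting on itself by
conjugation): pairs `(α,r)` with `α` a continuous crossed homomorphism and
`μ (α g) = r * g * r⁻¹ * g⁻¹` for all `g`. -/
def derSetG (μ : A →* G) : Set (C(G, A) × G) :=
  {p | (∀ g h : G, p.1 (g * h) = p.1 g * g • p.1 h) ∧
    ∀ g : G, μ (p.1 g) = p.2 * g * p.2⁻¹ * g⁻¹}

/-- `Inn(G,(A,μ)) = {((g ↦ a * (g • a)⁻¹), μ a) : a ∈ A}` (for trivial center). -/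
def innSetG (μ : A →* G) : Set (C(G, A) × G) :=
  {p | ∃ a : A, (∀ g : G, p.1 g = a * (g • a)⁻¹) ∧ p.2 = μ a}

/-- Let `G` be a locally compact Hausdorff group with trivial center and
`(A,μ)` a partially crossed topological `G`-module with `A` compact Hausdorff. Then
`Inn(G,(A,μ))` is a compact, hence closed, subset of `Der_c(G,(A,μ))` (with its subspace
topology from `C(G,A) × G`). -/
theorem innSet_compact_closed_trivial_center
    [LocallyCompactSpace G] [T2Space G] [CompactSpace A] [T2Space A]
    (hZ : Subgroup.center G = ⊥)
    (μ : A →* G) (hμc : Continuous μ)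
    (hμG : ∀ (g : G) (a : A), μ (g • a) = g * μ a * g⁻¹)
    (hpart : ∀ a : A, μ a ∈ commutator G → ∀ b : A, μ a • b = a * b * a⁻¹) :
    IsCompact (innSetG G A μ) ∧ innSetG G A μ ⊆ derSetG G A μ ∧
      IsClosed (Subtype.val ⁻¹' innSetG G A μ : Set (derSetG G A μ)) := by

  classical
  let F : C(A × G, A) := ⟨fun p => p.1 * (p.2 • p.1)⁻¹, by continuity⟩
  let Φ : A → C(G, A) × G := fun a => (F.curry a, μ a)
  have hΦ : Continuous Φ := F.curry.continuous.prodMk hμc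
  have hrange : innSetG G A μ = Set.range Φ := by
    ext p
    constructor
    · rintro ⟨a, h1, h2⟩
      exact ⟨a, (Prod.ext (ContinuousMap.ext fun g => (h1 g).symm) h2.symm)⟩
    · rintro ⟨a, rfl⟩
      exact ⟨a, fun g => rfl, rfl⟩
  have hcomp : IsCompact (innSetG G A μ) := by
    rw [hrange]; exact isCompact_range hΦ
  have hsub : innSetG G A μ ⊆ derSetG G A μ := by
    rintro p ⟨a, h1, h2⟩
    refine ⟨fun g h => ?_, fun g => ?_⟩
    · simp only [h1, mul_smul, smul_mul', smul_inv']
      group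
    · rw [h1, h2, map_mul, map_inv, hμG]
      group
  refine ⟨hcomp, hsub, ?_⟩
  have hcl : IsClosed (innSetG G A μ) := hcomp.isClosed
  exact hcl.preimage continuous_subtype_val
end

section
/- Let G be a topological group and A a compact Hausdorff abelian topological G-module. Then Inn(G,A) = {(g ↦ a·(g•a)⁻¹) : a ∈ A} is a compact, hence closed, subset of Der_c(G,A), the set of continuous crossed homomorphisms G → A with the compact-open topology. -/
variable (G A : Type*)
  [Group G] [TopologicalSpace G] [IsTopologicalGroup G]
  [CommGroup A] [TopologicalSpace A] [IsTopologicalGroup A]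
  [MulDistribMulAction G A] [ContinuousSMul G A]

/-- `Der_c(G,A)`: continuous crossed homomorphisms `G → A` inside `C(G,A)`. -/
def dercSet : Set C(G, A) := {α | ∀ g h : G, α (g * h) = α g * g • α h}

/-- `Inn(G,A) = {(g ↦ a * (g • a)⁻¹) : a ∈ A}`, the inner (principal) crossed homomorphisms. -/
def innSet : Set C(G, A) := {f | ∃ a : A, ∀ g : G, f g = a * (g • a)⁻¹}

/-- The map sending `a` to the inner crossed homomorphism `g ↦ a * (g • a)⁻¹`. -/
noncomputable def innMap : A → C(G, A) := fun a =>
  ⟨fun g => a * (g • a)⁻¹, by fun_prop⟩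

lemma innMap_continuous : Continuous (innMap G A) := by
  apply ContinuousMap.continuous_of_continuous_uncurry
  simp only [Function.uncurry, innMap, ContinuousMap.coe_mk]
  fun_prop

lemma innSet_eq_range : innSet G A = Set.range (innMap G A) := by
  ext f
  constructor
  · rintro ⟨a, ha⟩
    exact ⟨a, by ext g; exact (ha g).symm⟩
  · rintro ⟨a, rfl⟩
    exact ⟨a, fun g => rfl⟩

/-- Let `G` be a topological group and `A` a compact Hausdorff abelian
topological `G`-module. Then `Inn(G,A)` is a compact, hence closed, subset of `Der_c(G,A)`
(with the compact-open topology). -/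
theorem innSet_compact_closed
    [CompactSpace A] [T2Space A] :
    IsCompact (innSet G A) ∧ innSet G A ⊆ dercSet G A ∧
      IsClosed (Subtype.val ⁻¹' innSet G A : Set (dercSet G A)) := by
  have hcompact : IsCompact (innSet G A) := by
    rw [innSet_eq_range]
    exact isCompact_range (innMap_continuous G A)
  refine ⟨hcompact, ?_, ?_⟩
  · rintro f ⟨a, ha⟩ g h
    simp only [ha, smul_mul', smul_inv', smul_smul]
    group
  · exact (hcompact.isClosed).preimage continuous_subtype_val
end

section
/- Let G be a locally compact Hausdorff topological group and A a compact Hausdorff abelian topological group with no small subgroups. Then Hom_c(G,A), with the compact-open topology, is a locally compact topological group. -/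
/-- Let `G` be a locally compact Hausdorff group and `A` a compact Hausdorff
abelian topological group with no small subgroups. Then `Hom_c(G,A)`, with the compact-open
topology, is a locally compact topological group. -/
theorem homc_locallyCompact_of_compact_target
    (G A : Type*) [Group G] [TopologicalSpace G] [IsTopologicalGroup G]
    [LocallyCompactSpace G] [T2Space G]
    [CommGroup A] [TopologicalSpace A] [IsTopologicalGroup A] [CompactSpace A] [T2Space A]
    (hnss : ∃ U ∈ nhds (1 : A), ∀ H : Subgroup A, (H : Set A) ⊆ U → H = ⊥) :
    LocallyCompactSpace (ContinuousMonoidHom G A) := by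
  obtain ⟨U, hU, hUnss⟩ := hnss
  obtain ⟨V, hV, hVc, hVs, hVU⟩ := exists_closed_nhds_one_inv_eq_mul_subset hU
  have h1V : (1 : A) ∈ V := mem_of_mem_nhds hV
  have hVsubU : V ⊆ U := fun x hx => hVU (by simpa using Set.mul_mem_mul hx h1V)
  -- the "escape" property: if all small powers of `a` lie in `V`, then `a` is close to `1`
  have escape : ∀ W ∈ nhds (1 : A), ∃ N : ℕ, ∀ a : A, (∀ j ≤ N, a ^ j ∈ V) → a ∈ W := by
    intro W hW
    by_contra hcon
    push_neg at hcon
    set C : ℕ → Set A := fun n => {a | ∀ j ≤ n, a ^ j ∈ V} ∩ (interior W)ᶜ with hC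
    have hCc : ∀ n, IsClosed (C n) := by
      intro n
      refine IsClosed.inter ?_ isOpen_interior.isClosed_compl
      have : {a : A | ∀ j ≤ n, a ^ j ∈ V} = ⋂ j, ⋂ (_ : j ≤ n), (fun a : A => a ^ j) ⁻¹' V := by
        ext a; simp
      rw [this]
      exact isClosed_iInter fun j => isClosed_iInter fun _ => hVc.preimage (continuous_pow j)
    have hCne : ∀ n, (C n).Nonempty := by
      intro n
      obtain ⟨a, ha, haW⟩ := hcon n
      exact ⟨a, ha, fun h => haW (interior_subset h)⟩
    have hmono : ∀ m n, m ≤ n → C n ⊆ C m := fun m n hmn a ha =>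
      ⟨fun j hj => ha.1 j (hj.trans hmn), ha.2⟩
    have hne : (⋂ n, C n).Nonempty := by
      apply IsCompact.nonempty_iInter_of_directed_nonempty_isCompact_isClosed C
      · intro m n
        exact ⟨m + n, hmono m (m + n) (Nat.le_add_right m n),
          hmono n (m + n) (Nat.le_add_left n m)⟩
      · exact hCne
      · exact fun n => (hCc n).isCompact
      · exact hCc
    obtain ⟨a, ha⟩ := hne
    have hpow : ∀ j : ℕ, a ^ j ∈ V := by
      intro j
      exact ((Set.mem_iInter.mp ha) j).1 j le_rfl
    have hzpow : (Subgroup.zpowers a : Set A) ⊆ U := by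
      rintro _ ⟨k, rfl⟩
      refine hVsubU ?_
      rcases k with n | n
      · simpa using hpow n
      · show a ^ Int.negSucc n ∈ V
        rw [zpow_negSucc, ← hVs]
        simpa using hpow (n + 1)
    have : a = 1 := by
      have := hUnss (Subgroup.zpowers a) hzpow
      rwa [Subgroup.zpowers_eq_bot] at this
    have haW : a ∉ interior W := ((Set.mem_iInter.mp ha) 0).2
    exact haW (this ▸ mem_interior_iff_mem_nhds.mpr hW)
  letI : UniformSpace A := IsTopologicalGroup.rightUniformSpace A
  haveI : IsUniformGroup A := isUniformGroup_of_commGroup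
  obtain ⟨K, hKc, hKmem⟩ := exists_compact_mem_nhds (1 : G)
  apply ContinuousMonoidHom.locallyCompactSpace_of_equicontinuousAt K V hKc hV
  rw [((nhds (1 : A)).basis_sets.uniformity_of_nhds_one).equicontinuousAt_iff_right]
  intro W hW
  obtain ⟨N, hN⟩ := escape W hW
  have hO : {x : G | ∀ j ≤ N, x ^ j ∈ K} ∈ nhds (1 : G) := by
    have : {x : G | ∀ j ≤ N, x ^ j ∈ K} = ⋂ j ∈ Set.Iic N, (fun x : G => x ^ j) ⁻¹' K := by
      ext x; simp
    rw [this]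
    refine (Filter.biInter_mem (Set.finite_Iic N)).mpr fun j _ => ?_
    exact (continuous_pow j).continuousAt.preimage_mem_nhds (by rwa [one_pow])
  refine Filter.eventually_iff_exists_mem.mpr ⟨_, hO, fun x hx ⟨f, hf⟩ => ?_⟩
  rw [Set.mem_setOf_eq, map_one, div_one]
  refine hN _ fun j hj => ?_
  rw [← map_pow]
  exact hf (hx j hj)
end

section
/- Let G be a locally compact Hausdorff topological group that is compactly generated (i.e., generated as a group by some compact subset), and let A be a locally compact Hausdorff abelian topological group with no small subgroups. Then Hom_c(G,A), with the compact-open topology, is a locally compact topological group. -/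
open Filter Set Pointwise

/-- NSS key lemma: if all subgroups contained in `U` are trivial and `V ⊆ U` is a compact
closed symmetric set, then the sets `{y | ∀ k ≤ n, y ^ k ∈ V}` are eventually inside any
neighborhood of `1`. -/
lemma nss_key {A : Type*} [CommGroup A] [TopologicalSpace A] [IsTopologicalGroup A]
    {U V : Set A} (hVcomp : IsCompact V) (hVcl : IsClosed V)
    (hVsymm : ∀ y ∈ V, y⁻¹ ∈ V) (hVU : V ⊆ U)
    (hU : ∀ H : Subgroup A, (H : Set A) ⊆ U → H = ⊥)
    {O : Set A} (hO : O ∈ nhds 1) :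
    ∃ n : ℕ, {y : A | ∀ k ≤ n, y ^ k ∈ V} ⊆ O := by
  by_contra h
  push_neg at h
  have h' : ∀ n : ℕ, ∃ y : A, (∀ k ≤ n, y ^ k ∈ V) ∧ y ∉ interior O := by
    intro n
    obtain ⟨y, hy1, hy2⟩ := Set.not_subset.mp (h n)
    exact ⟨y, hy1, fun hy => hy2 (interior_subset hy)⟩
  set t : ℕ → Set A := fun n => {y : A | (∀ k ≤ n + 1, y ^ k ∈ V) ∧ y ∉ interior O} with ht
  have htcl : ∀ n, IsClosed (t n) := by
    intro n
    have h1 : IsClosed {y : A | ∀ k ≤ n + 1, y ^ k ∈ V} := by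
      have : {y : A | ∀ k ≤ n + 1, y ^ k ∈ V} = ⋂ k ∈ Finset.range (n + 2),
          (fun y : A => y ^ k) ⁻¹' V := by
        ext y
        simp [Nat.lt_succ_iff]
      rw [this]
      exact isClosed_biInter fun k _ => hVcl.preimage (continuous_pow k)
    exact h1.inter (isOpen_interior.isClosed_compl)
  have htsub : ∀ n, t n ⊆ V := by
    intro n y hy
    simpa using hy.1 1 (by omega)
  have htd : ∀ n, t (n + 1) ⊆ t n := by
    intro n y hy
    exact ⟨fun k hk => hy.1 k (by omega), hy.2⟩
  have htn : ∀ n, (t n).Nonempty := by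
    intro n
    obtain ⟨y, hy1, hy2⟩ := h' (n + 1)
    exact ⟨y, hy1, hy2⟩
  have htc : IsCompact (t 0) := hVcomp.of_isClosed_subset (htcl 0) (htsub 0)
  obtain ⟨y, hy⟩ := IsCompact.nonempty_iInter_of_sequence_nonempty_isCompact_isClosed
    t htd htn htc htcl
  simp only [Set.mem_iInter] at hy
  have hyV : ∀ k : ℕ, y ^ k ∈ V := fun k => (hy k).1 k (by omega)
  have hzpow : (Subgroup.zpowers y : Set A) ⊆ V := by
    rintro x ⟨m, rfl⟩
    match m with
    | Int.ofNat k => simpa [zpow_natCast] using hyV k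
    | Int.negSucc k =>
        show y ^ (Int.negSucc k) ∈ V
        rw [zpow_negSucc]
        exact hVsymm _ (hyV (k + 1))
  have hbot : Subgroup.zpowers y = ⊥ := hU _ (hzpow.trans hVU)
  have hy1 : y = 1 := by
    have : y ∈ Subgroup.zpowers y := Subgroup.mem_zpowers y
    rw [hbot] at this
    simpa using this
  exact (hy 0).2 (hy1 ▸ mem_interior_iff_mem_nhds.mpr hO)

/-- Pointwise boundedness: if `K` generates `G`, every monoid hom mapping `K` into `V` has
its value at any fixed `x` in some fixed compact set. -/
lemma pointwise_bound {G A : Type*} [Group G] [CommGroup A] [TopologicalSpace A]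
    [IsTopologicalGroup A] {K : Set G} {V : Set A} (hV : IsCompact V)
    (hgen : Subgroup.closure K = ⊤) (x : G) :
    ∃ Q : Set A, IsCompact Q ∧ ∀ f : G →* A, Set.MapsTo f K V → f x ∈ Q := by
  have hx : x ∈ Subgroup.closure K := hgen ▸ Subgroup.mem_top x
  induction hx using Subgroup.closure_induction with
  | mem z hz => exact ⟨V, hV, fun f hf => hf hz⟩
  | one => exact ⟨{1}, isCompact_singleton, fun f _ => by simp⟩
  | mul z w _ _ ihz ihw =>
      obtain ⟨Q1, hQ1, h1⟩ := ihz
      obtain ⟨Q2, hQ2, h2⟩ := ihw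
      exact ⟨Q1 * Q2, hQ1.mul hQ2, fun f hf => by
        rw [map_mul]; exact Set.mul_mem_mul (h1 f hf) (h2 f hf)⟩
  | inv z _ ihz =>
      obtain ⟨Q, hQ, h1⟩ := ihz
      exact ⟨Q⁻¹, hQ.inv, fun f hf => by
        rw [map_inv]; exact Set.inv_mem_inv.mpr (h1 f hf)⟩

/-- Let `G` be a locally compact Hausdorff compactly generated group and `A`
a locally compact Hausdorff abelian topological group with no small subgroups. Then
`Hom_c(G,A)`, with the compact-open topology, is a locally compact topological group. -/
theorem homc_locallyCompact_of_compactlyGenerated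
    (G A : Type*) [Group G] [TopologicalSpace G] [IsTopologicalGroup G]
    [LocallyCompactSpace G] [T2Space G]
    (hgen : ∃ K : Set G, IsCompact K ∧ Subgroup.closure K = ⊤)
    [CommGroup A] [TopologicalSpace A] [IsTopologicalGroup A] [LocallyCompactSpace A] [T2Space A]
    (hnss : ∃ U ∈ nhds (1 : A), ∀ H : Subgroup A, (H : Set A) ⊆ U → H = ⊥) :
    LocallyCompactSpace (ContinuousMonoidHom G A) := by
  letI : UniformSpace A := IsTopologicalGroup.rightUniformSpace A
  haveI : IsUniformGroup A := isUniformGroup_of_commGroup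
  obtain ⟨K0, hK0c, hK0gen⟩ := hgen
  obtain ⟨C, hCc, hCn⟩ := exists_compact_mem_nhds (1 : G)
  set K : Set G := K0 ∪ C with hKdef
  have hKc : IsCompact K := hK0c.union hCc
  have hKn : K ∈ nhds (1 : G) := Filter.mem_of_superset hCn Set.subset_union_right
  have hKgen : Subgroup.closure K = ⊤ :=
    top_unique (hK0gen ▸ Subgroup.closure_mono Set.subset_union_left)
  obtain ⟨U, hU, hUsub⟩ := hnss
  obtain ⟨V0, hV0n, hV0U, hV0comp⟩ := local_compact_nhds hU
  set V : Set A := V0 ∩ V0⁻¹ with hVdef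
  have hV0cl : IsClosed V0 := hV0comp.isClosed
  have hVcl : IsClosed V := hV0cl.inter (hV0cl.preimage continuous_inv)
  have hVcomp : IsCompact V := hV0comp.of_isClosed_subset hVcl Set.inter_subset_left
  have hVn : V ∈ nhds (1 : A) := by
    refine Filter.inter_mem hV0n ?_
    have : Filter.Tendsto (fun y : A => y⁻¹) (nhds 1) (nhds 1) := by
      simpa using (continuous_inv.tendsto (1 : A))
    exact this hV0n
  have hVsymm : ∀ y ∈ V, y⁻¹ ∈ V := by
    rintro y ⟨h1, h2⟩
    exact ⟨h2, by simpa using h1⟩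
  have hVU : V ⊆ U := Set.inter_subset_left.trans hV0U
  -- equicontinuity at 1 of homs mapping K into V
  have key : EquicontinuousAt (DFunLike.coe ∘
      (Subtype.val : {f : G →* A | Set.MapsTo f K V} → G →* A)) 1 := by
    rw [(Filter.basis_sets (nhds (1 : A))).uniformity_of_nhds_one.equicontinuousAt_iff_right]
    intro O hO
    obtain ⟨n, hn⟩ := nss_key hVcomp hVcl hVsymm hVU hUsub hO
    have hP : {x : G | ∀ k ≤ n, x ^ k ∈ K} ∈ nhds (1 : G) := by
      have : (⋂ k ∈ Finset.range (n + 1), (fun x : G => x ^ k) ⁻¹' (interior K)) ∈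
          nhds (1 : G) := by
        refine (Filter.biInter_finset_mem _).mpr fun k _ => ?_
        have h1 : (1 : G) ∈ interior K := mem_interior_iff_mem_nhds.mpr hKn
        exact (continuous_pow k).continuousAt.preimage_mem_nhds (by simpa using
          (isOpen_interior.mem_nhds h1))
      refine Filter.mem_of_superset this ?_
      intro x hx k hk
      simp only [Set.mem_iInter] at hx
      exact interior_subset (hx k (Finset.mem_range.mpr (by omega)))
    filter_upwards [hP] with x hx f
    obtain ⟨f, hf⟩ := f
    simp only [Set.mem_setOf_eq, Function.comp_apply, map_one, div_one]
    refine hn ?_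
    intro k hk
    rw [← map_pow]
    exact hf (hx k hk)
  replace key := equicontinuous_of_equicontinuousAt_one _ key
  have key' : Equicontinuous
      (fun f : {f : G →* A | Set.MapsTo f K V} ↦ ((f : G →* A) : G → A)) := key
  let S1 : Set (G →* A) := {f | Set.MapsTo f K V}
  let S2 : Set (ContinuousMonoidHom G A) := {f | Set.MapsTo f K V}
  let S3 : Set C(G, A) := (↑) '' S2
  let S4 : Set (G → A) := (↑) '' S3
  have hS4 : S4 = (↑) '' S1 := by
    ext g
    constructor
    · rintro ⟨-, ⟨f, hf, rfl⟩, rfl⟩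
      exact ⟨f, hf, rfl⟩
    · rintro ⟨f, hf, rfl⟩
      exact ⟨⟨f, key'.continuous ⟨f, hf⟩⟩, ⟨⟨f, key'.continuous ⟨f, hf⟩⟩, hf, rfl⟩, rfl⟩
  have hequiS3 : Equicontinuous ((↑) : S3 → G → A) := by
    rw [equicontinuous_iff_range, ← Set.image_eq_range] at key' ⊢
    rwa [← hS4] at key'
  have hS4' : S4 = Set.pi K (fun _ ↦ V) ∩ Set.range ((↑) : (G →* A) → (G → A)) := by
    simp_rw [hS4, Set.ext_iff, Set.mem_image, S1, Set.mem_setOf_eq]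
    exact fun f ↦ ⟨fun ⟨g, hg, hf⟩ ↦ hf ▸ ⟨hg, g, rfl⟩, fun ⟨hg, g, hf⟩ ↦ ⟨g, hf ▸ hg, hf⟩⟩
  have hS4cl : IsClosed S4 :=
    hS4'.symm ▸ (isClosed_set_pi (fun _ _ ↦ hVcl)).inter (MonoidHom.isClosed_range_coe G A)
  -- pointwise bound gives compactness of S4
  choose Q hQc hQb using fun x : G => pointwise_bound hVcomp hKgen x
  have hS4comp : IsCompact S4 := by
    refine (isCompact_univ_pi hQc).of_isClosed_subset hS4cl ?_
    rw [hS4]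
    rintro - ⟨f, hf, rfl⟩
    exact fun x _ => hQb x f hf
  have hS2 : (interior S2).Nonempty := by
    let T : Set (ContinuousMonoidHom G A) := {f | Set.MapsTo f K (interior V)}
    have h1 : T.Nonempty := ⟨1, fun _ _ ↦ mem_interior_iff_mem_nhds.mpr hVn⟩
    have h2 : T ⊆ S2 := fun f hf ↦ hf.mono_right interior_subset
    have h3 : IsOpen T := isOpen_induced (ContinuousMap.isOpen_setOfPred_mapsTo hKc isOpen_interior)
    exact h1.mono (interior_maximal h2 h3)
  exact TopologicalSpace.PositiveCompacts.locallyCompactSpace_of_group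
    ⟨⟨S2, (ContinuousMonoidHom.isInducing_toContinuousMap G A).isCompact_iff.mpr
      (ArzelaAscoli.isCompact_of_equicontinuous S3 hS4comp hequiS3)⟩, hS2⟩
end

section
/- Let G be a compact Hausdorff topological group and A a Hausdorff abelian topological group with no small subgroups. Then Hom_c(G,A), with the compact-open topology, is a discrete topological group. -/
/-- Let `G` be a compact Hausdorff group and `A` a Hausdorff abelian
topological group with no small subgroups. Then `Hom_c(G,A)`, with the compact-open topology,
is a discrete topological group. -/
theorem homc_discrete_of_compact_source
    (G A : Type*) [Group G] [TopologicalSpace G] [IsTopologicalGroup G]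
    [CompactSpace G] [T2Space G]
    [CommGroup A] [TopologicalSpace A] [IsTopologicalGroup A] [T2Space A]
    (hnss : ∃ U ∈ nhds (1 : A), ∀ H : Subgroup A, (H : Set A) ⊆ U → H = ⊥) :
    DiscreteTopology (ContinuousMonoidHom G A) := by
  obtain ⟨U, hU, hsmall⟩ := hnss
  obtain ⟨V, hVU, hVopen, hV1⟩ := mem_nhds_iff.mp hU
  rw [discreteTopology_iff_isOpen_singleton_one]
  have hopen : IsOpen {g : C(G, A) | Set.MapsTo g Set.univ V} :=
    ContinuousMap.isOpen_setOf_mapsTo isCompact_univ hVopen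
  have : ({1} : Set (ContinuousMonoidHom G A)) =
      (ContinuousMonoidHom.toContinuousMap) ⁻¹' {g : C(G, A) | Set.MapsTo g Set.univ V} := by
    ext f
    simp only [Set.mem_singleton_iff, Set.mem_preimage, Set.mem_setOf_eq]
    constructor
    · rintro rfl
      intro x _
      exact hV1
    · intro hf
      have hrange : ((f : G →* A).range : Set A) ⊆ U := by
        rintro a ⟨x, rfl⟩
        exact hVU (hf (Set.mem_univ x))
      have hbot := hsmall _ hrange
      ext x
      have : f x ∈ (f : G →* A).range := ⟨x, rfl⟩
      rw [hbot] at this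
      simpa using this
  rw [this]
  exact hopen.preimage (ContinuousMonoidHom.isInducing_toContinuousMap G A).continuous
end

section
/- Let (A,μ) be a partially crossed topological G-R-bimodule where G is a discrete topological group and A and R are compact Hausdorff topological groups. Then Der_c(G,(A,μ)), with its subspace topology from C(G,A) × R (C(G,A) carrying the compact-open topology), is compact. -/
variable (G R A : Type*)
  [Group G] [TopologicalSpace G] [IsTopologicalGroup G]
  [Group R] [TopologicalSpace R] [IsTopologicalGroup R]
  [Group A] [TopologicalSpace A] [IsTopologicalGroup A]
  [MulDistribMulAction R A] [ContinuousSMul R A]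
  [MulDistribMulAction G A] [ContinuousSMul G A]
  [MulDistribMulAction G R] [ContinuousSMul G R]

open Topology Filter in
/-- Evaluation on a product with a discrete space is continuous. -/
lemma continuous_eval_discrete {X Y : Type*} [TopologicalSpace X] [TopologicalSpace Y]
    [DiscreteTopology X] : Continuous (fun p : (X → Y) × X => p.1 p.2) := by
  refine continuous_iff_continuousAt.2 fun q => ?_
  obtain ⟨φ, g⟩ := q
  rw [ContinuousAt, nhds_prod_eq, nhds_discrete X]
  have h1 : Tendsto (fun p : (X → Y) × X => p.1 g) (𝓝 φ ×ˢ pure g) (𝓝 (φ g)) :=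
    ((continuous_apply g).tendsto φ).comp tendsto_fst
  refine h1.congr' ?_
  have h2 : ∀ᶠ p : (X → Y) × X in 𝓝 φ ×ˢ pure g, p.2 = g := tendsto_pure.mp tendsto_snd
  filter_upwards [h2] with p hp
  rw [hp]

/-- `C(X,Y)` is compact when `X` is discrete and `Y` compact. -/
lemma compactSpace_continuousMap_discrete {X Y : Type*} [TopologicalSpace X]
    [TopologicalSpace Y] [DiscreteTopology X] [CompactSpace Y] :
    CompactSpace C(X, Y) := by
  have hc : Continuous (fun f : X → Y => (⟨f, continuous_of_discreteTopology⟩ : C(X, Y))) :=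
    ContinuousMap.continuous_of_continuous_uncurry _ continuous_eval_discrete
  have hsurj : Function.Surjective
      (fun f : X → Y => (⟨f, continuous_of_discreteTopology⟩ : C(X, Y))) := by
    intro f; exact ⟨f, rfl⟩
  constructor
  rw [← Set.image_univ_of_surjective hsurj]
  exact isCompact_univ.image hc

/-- Let `(A,μ)` be a partially crossed topological `G-R`-bimodule with `G`
discrete and `A`, `R` compact Hausdorff. Then `Der_c(G,(A,μ))`, with its subspace topology
from `C(G,A) × R`, is compact. -/
theorem derc_bimodule_compact
    [DiscreteTopology G] [CompactSpace A] [T2Space A] [CompactSpace R] [T2Space R]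
    (μ : A →* R) (hμc : Continuous μ)
    (hμR : ∀ (r : R) (a : A), μ (r • a) = r * μ a * r⁻¹)
    (hμG : ∀ (g : G) (a : A), μ (g • a) = g • μ a)
    (hcomp : ∀ (g : G) (r : R) (a : A), (g • r) • a = g • r • g⁻¹ • a)
    (hpart : ∀ a : A, μ a ∈ commutator R → ∀ b : A, μ a • b = a * b * a⁻¹) :
    IsCompact (derSet G R A μ) := by
  haveI : CompactSpace C(G, A) := compactSpace_continuousMap_discrete
  have hev : ∀ g : G, Continuous (fun p : C(G, A) × R => p.1 g) := fun g =>
    (continuous_eval_const g).comp continuous_fst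
  have hclosed : IsClosed (derSet G R A μ) := by
    have : derSet G R A μ =
        (⋂ g : G, ⋂ h : G, {p : C(G, A) × R | p.1 (g * h) = p.1 g * g • p.1 h}) ∩
        (⋂ g : G, {p : C(G, A) × R | μ (p.1 g) = p.2 * (g • p.2)⁻¹}) := by
      ext p
      simp only [derSet, Set.mem_setOf_eq, Set.mem_inter_iff, Set.mem_iInter]
    rw [this]
    refine IsClosed.inter (isClosed_iInter fun g => isClosed_iInter fun h => ?_)
      (isClosed_iInter fun g => ?_)
    · exact isClosed_eq (hev (g * h)) ((hev g).mul ((hev h).const_smul g))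
    · exact isClosed_eq (hμc.comp (hev g))
        ((continuous_snd).mul (((continuous_snd).const_smul g).inv))
  exact hclosed.isCompact
end
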